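/- There is a k-algebra isomorphism from O_q(N⁺) onto O_q(N⁺)′ sending y_{ij} = X_{ii}⁻¹X_{ij} to z_{ij} = X_{ij}X_{jj}⁻¹ for all 1 ≤ i < j ≤ n+1. -/

import Mathlib

open scoped TensorProduct

noncomputable section

namespace QSL

/-- The generator `X i j` of the free algebra underlying `O_q(SL_{n+1})`. -/
def Xf (k : Type) [Field k] (n : ℕ) (i j : Fin (n+1)) :
    FreeAlgebra k (Fin (n+1) × Fin (n+1)) :=
  FreeAlgebra.ι k (i, j)

/-- The number of inversions (the length `ℓ(σ)`) of a permutation. -/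
def invCount {m : ℕ} (σ : Equiv.Perm (Fin m)) : ℕ :=
  (Finset.univ.filter (fun p : Fin m × Fin m => p.1 < p.2 ∧ σ p.2 < σ p.1)).card

/-- The quantum determinant `∑_σ (-q)^{ℓ(σ)} X_{1σ(1)} ⋯ X_{n+1,σ(n+1)}`. -/
def qdet (k : Type) [Field k] (q : k) (n : ℕ) : FreeAlgebra k (Fin (n+1) × Fin (n+1)) :=
  ∑ σ : Equiv.Perm (Fin (n+1)),
    ((-q) ^ invCount σ) • (List.ofFn fun i => Xf k n i (σ i)).prod

/-- Defining relations of `O_q(SL_{n+1})`. -/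
inductive SLRel (k : Type) [Field k] (q : k) (n : ℕ) :
    FreeAlgebra k (Fin (n+1) × Fin (n+1)) → FreeAlgebra k (Fin (n+1) × Fin (n+1)) → Prop
  | row {i j m : Fin (n+1)} (h : j < m) :
      SLRel k q n (Xf k n i j * Xf k n i m) (q • (Xf k n i m * Xf k n i j))
  | col {i l j : Fin (n+1)} (h : i < l) :
      SLRel k q n (Xf k n i j * Xf k n l j) (q • (Xf k n l j * Xf k n i j))
  | swap {i l j m : Fin (n+1)} (h1 : i < l) (h2 : m < j) :
      SLRel k q n (Xf k n i j * Xf k n l m) (Xf k n l m * Xf k n i j)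
  | mixed {i l j m : Fin (n+1)} (h1 : i < l) (h2 : j < m) :
      SLRel k q n (Xf k n i j * Xf k n l m)
        (Xf k n l m * Xf k n i j + (q - q⁻¹) • (Xf k n i m * Xf k n l j))
  | det : SLRel k q n (qdet k q n) 1

/-- The quantized coordinate ring `O_q(SL_{n+1})`. -/
abbrev OqSL (k : Type) [Field k] (q : k) (n : ℕ) := RingQuot (SLRel k q n)

/-- The generator `X i j` of `O_q(SL_{n+1})`. -/
def XSL (k : Type) [Field k] (q : k) (n : ℕ) (i j : Fin (n+1)) : OqSL k q n :=
  RingQuot.mkAlgHom k (SLRel k q n) (Xf k n i j)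

/-- Relations `X i j = 0` for `i > j`, defining `O_q(B⁺)`. -/
inductive BpRel (k : Type) [Field k] (q : k) (n : ℕ) : OqSL k q n → OqSL k q n → Prop
  | zero {i j : Fin (n+1)} (h : j < i) : BpRel k q n (XSL k q n i j) 0

/-- Relations `X i j = 0` for `i < j`, defining `O_q(B⁻)`. -/
inductive BmRel (k : Type) [Field k] (q : k) (n : ℕ) : OqSL k q n → OqSL k q n → Prop
  | zero {i j : Fin (n+1)} (h : i < j) : BmRel k q n (XSL k q n i j) 0

/-- Relations `X i j = 0` for `i ≠ j`, defining `O_q(T)`. -/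
inductive TRel (k : Type) [Field k] (q : k) (n : ℕ) : OqSL k q n → OqSL k q n → Prop
  | zero {i j : Fin (n+1)} (h : i ≠ j) : TRel k q n (XSL k q n i j) 0

/-- The quantized coordinate ring `O_q(B⁺)` of the positive Borel. -/
abbrev OqBp (k : Type) [Field k] (q : k) (n : ℕ) := RingQuot (BpRel k q n)

/-- The quantized coordinate ring `O_q(B⁻)` of the negative Borel. -/
abbrev OqBm (k : Type) [Field k] (q : k) (n : ℕ) := RingQuot (BmRel k q n)

/-- The quantized coordinate ring `O_q(T)` of the maximal torus. -/
abbrev OqT (k : Type) [Field k] (q : k) (n : ℕ) := RingQuot (TRel k q n)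

/-- The coset of `X i j` in `O_q(B⁺)`. -/
def XBp (k : Type) [Field k] (q : k) (n : ℕ) (i j : Fin (n+1)) : OqBp k q n :=
  RingQuot.mkAlgHom k (BpRel k q n) (XSL k q n i j)

/-- The coset of `X i j` in `O_q(B⁻)`. -/
def XBm (k : Type) [Field k] (q : k) (n : ℕ) (i j : Fin (n+1)) : OqBm k q n :=
  RingQuot.mkAlgHom k (BmRel k q n) (XSL k q n i j)

/-- The coset `Y i i` of `X i i` in `O_q(T)`. -/
def YT (k : Type) [Field k] (q : k) (n : ℕ) (i : Fin (n+1)) : OqT k q n :=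
  RingQuot.mkAlgHom k (TRel k q n) (XSL k q n i i)

/-- `y i j = X_{ii}⁻¹ X_{ij}` in `O_q(B⁺)`. -/
def yY (k : Type) [Field k] (q : k) (n : ℕ) (i j : Fin (n+1)) : OqBp k q n :=
  Ring.inverse (XBp k q n i i) * XBp k q n i j

/-- `z i j = X_{ij} X_{jj}⁻¹` in `O_q(B⁺)`. -/
def zZ (k : Type) [Field k] (q : k) (n : ℕ) (i j : Fin (n+1)) : OqBp k q n :=
  XBp k q n i j * Ring.inverse (XBp k q n j j)

/-- The subalgebra `O_q(N⁺)` of `O_q(B⁺)`, generated by the `X_{ii}⁻¹X_{ij}`, `i < j`. -/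
def OqNp (k : Type) [Field k] (q : k) (n : ℕ) : Subalgebra k (OqBp k q n) :=
  Algebra.adjoin k {a | ∃ i j : Fin (n+1), i < j ∧ a = yY k q n i j}

/-- The subalgebra `O_q(N⁺)'` of `O_q(B⁺)`, generated by the `X_{ij}X_{jj}⁻¹`, `i < j`. -/
def OqNp' (k : Type) [Field k] (q : k) (n : ℕ) : Subalgebra k (OqBp k q n) :=
  Algebra.adjoin k {a | ∃ i j : Fin (n+1), i < j ∧ a = zZ k q n i j}

/-- `X_{jj}⁻¹ X_{ji}` in `O_q(B⁻)` (for `i < j`). -/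
def yNm (k : Type) [Field k] (q : k) (n : ℕ) (i j : Fin (n+1)) : OqBm k q n :=
  Ring.inverse (XBm k q n j j) * XBm k q n j i

/-- `X_{ji} X_{ii}⁻¹` in `O_q(B⁻)` (for `i < j`). -/
def zNm (k : Type) [Field k] (q : k) (n : ℕ) (i j : Fin (n+1)) : OqBm k q n :=
  XBm k q n j i * Ring.inverse (XBm k q n i i)

/-- The subalgebra `O_q(N⁻)` of `O_q(B⁻)`, generated by the `X_{jj}⁻¹X_{ji}`, `i < j`. -/
def OqNm (k : Type) [Field k] (q : k) (n : ℕ) : Subalgebra k (OqBm k q n) :=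
  Algebra.adjoin k {a | ∃ i j : Fin (n+1), i < j ∧ a = yNm k q n i j}

/-- The subalgebra `O_q(N⁻)'` of `O_q(B⁻)`, generated by the `X_{ji}X_{ii}⁻¹`, `i < j`. -/
def OqNm' (k : Type) [Field k] (q : k) (n : ℕ) : Subalgebra k (OqBm k q n) :=
  Algebra.adjoin k {a | ∃ i j : Fin (n+1), i < j ∧ a = zNm k q n i j}

end QSL

namespace QSLAux
open QSL

variable {k : Type} [Field k] {q : k} {n : ℕ}

lemma Xrow (i : Fin (n+1)) {j m : Fin (n+1)} (h : j < m) :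
    XBp k q n i j * XBp k q n i m = q • (XBp k q n i m * XBp k q n i j) := by
  have := congrArg (RingQuot.mkAlgHom k (BpRel k q n))
    (RingQuot.mkAlgHom_rel k (SLRel.row (i := i) h))
  simpa only [map_mul, map_smul, XBp, XSL] using this

lemma Xcol {i l : Fin (n+1)} (j : Fin (n+1)) (h : i < l) :
    XBp k q n i j * XBp k q n l j = q • (XBp k q n l j * XBp k q n i j) := by
  have := congrArg (RingQuot.mkAlgHom k (BpRel k q n))
    (RingQuot.mkAlgHom_rel k (SLRel.col (j := j) h))
  simpa only [map_mul, map_smul, XBp, XSL] using this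

lemma Xswap {i l j m : Fin (n+1)} (h1 : i < l) (h2 : m < j) :
    XBp k q n i j * XBp k q n l m = XBp k q n l m * XBp k q n i j := by
  have := congrArg (RingQuot.mkAlgHom k (BpRel k q n))
    (RingQuot.mkAlgHom_rel k (SLRel.swap h1 h2))
  simpa only [map_mul, XBp, XSL] using this

lemma Xmixed {i l j m : Fin (n+1)} (h1 : i < l) (h2 : j < m) :
    XBp k q n i j * XBp k q n l m =
      XBp k q n l m * XBp k q n i j + (q - q⁻¹) • (XBp k q n i m * XBp k q n l j) := by
  have := congrArg (RingQuot.mkAlgHom k (BpRel k q n))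
    (RingQuot.mkAlgHom_rel k (SLRel.mixed h1 h2))
  simpa only [map_mul, map_add, map_smul, XBp, XSL] using this

lemma Xzero {i j : Fin (n+1)} (h : j < i) : XBp k q n i j = 0 := by
  have := RingQuot.mkAlgHom_rel k (BpRel.zero (k := k) (q := q) (n := n) h)
  simpa only [map_zero, XBp] using this

lemma diag_comm (i j : Fin (n+1)) : Commute (XBp k q n i i) (XBp k q n j j) := by
  rcases lt_trichotomy i j with h | h | h
  · have := Xmixed (k := k) (q := q) (n := n) (i := i) (j := i) (l := j) (m := j) h h
    rw [Xzero (k := k) (q := q) (n := n) h, mul_zero, smul_zero, add_zero] at this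
    exact this
  · rw [h]
  · have := Xmixed (k := k) (q := q) (n := n) (i := j) (j := j) (l := i) (m := i) h h
    rw [Xzero (k := k) (q := q) (n := n) h, mul_zero, smul_zero, add_zero] at this
    exact this.symm

lemma perm_exists_lt {σ : Equiv.Perm (Fin (n+1))} (h : σ ≠ 1) : ∃ i, σ i < i := by
  by_contra hc
  push_neg at hc
  apply h
  have hle : ∀ i ∈ (Finset.univ : Finset (Fin (n+1))), (i : ℕ) ≤ ((σ i : Fin (n+1)) : ℕ) :=
    fun i _ => hc i
  have hsum : (∑ i : Fin (n+1), ((i : ℕ))) = ∑ i : Fin (n+1), (((σ i : Fin (n+1))) : ℕ) :=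
    (Equiv.sum_comp σ (fun i : Fin (n+1) => (i : ℕ))).symm
  have key := (Finset.sum_eq_sum_iff_of_le hle).mp hsum
  apply Equiv.ext
  intro i
  have := key i (Finset.mem_univ i)
  simpa using Fin.val_injective this.symm

lemma invCount_one : invCount (1 : Equiv.Perm (Fin (n+1))) = 0 := by
  rw [invCount, Finset.card_eq_zero, Finset.filter_eq_empty_iff]
  rintro p _
  simp only [Equiv.Perm.coe_one, id_eq]
  rintro ⟨h1, h2⟩
  exact absurd h1 (lt_asymm h2)

lemma prod_diag : (List.ofFn fun l => XBp k q n l l).prod = 1 := by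
  have h1 := congrArg (RingQuot.mkAlgHom k (BpRel k q n))
    (RingQuot.mkAlgHom_rel k (SLRel.det (k := k) (q := q) (n := n)))
  rw [map_one, map_one] at h1
  rw [qdet, map_sum, map_sum] at h1
  have hterm : ∀ σ : Equiv.Perm (Fin (n+1)),
      (RingQuot.mkAlgHom k (BpRel k q n))
        ((RingQuot.mkAlgHom k (SLRel k q n))
          (((-q) ^ invCount σ) • (List.ofFn fun i => Xf k n i (σ i)).prod)) =
      ((-q) ^ invCount σ) • (List.ofFn fun i => XBp k q n i (σ i)).prod := by
    intro σ
    simp only [map_smul, map_list_prod, List.map_ofFn, Function.comp_def]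
    rfl
  simp only [hterm] at h1
  rw [Finset.sum_eq_single_of_mem (1 : Equiv.Perm (Fin (n+1))) (Finset.mem_univ _)] at h1
  · rw [invCount_one, pow_zero, one_smul] at h1
    simpa only [Equiv.Perm.coe_one, id_eq] using h1
  · intro σ _ hσ
    obtain ⟨i, hi⟩ := perm_exists_lt hσ
    have : (0 : OqBp k q n) ∈ (List.ofFn fun i => XBp k q n i (σ i)) := by
      rw [List.mem_ofFn]
      exact ⟨i, Xzero hi⟩
    rw [List.prod_eq_zero this, smul_zero]

lemma isUnit_list_of_comm :
    ∀ (L : List (OqBp k q n)), L.Pairwise Commute → IsUnit L.prod → ∀ a ∈ L, IsUnit a := by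
  intro L
  induction L with
  | nil => intro _ _ a ha; exact absurd ha List.not_mem_nil
  | cons b L ih =>
    intro hp hu a ha
    rw [List.pairwise_cons] at hp
    rw [List.prod_cons] at hu
    have hcomm : Commute b L.prod := Commute.list_prod_right _ _ hp.1
    obtain ⟨hub, huL⟩ := hcomm.isUnit_mul_iff.mp hu
    rcases List.mem_cons.mp ha with rfl | ha'
    · exact hub
    · exact ih hp.2 huL a ha'

lemma isUnit_diag (i : Fin (n+1)) : IsUnit (XBp k q n i i) := by
  apply isUnit_list_of_comm (List.ofFn fun l => XBp k q n l l)
  · exact List.pairwise_ofFn.mpr fun a b _ => diag_comm a b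
  · rw [prod_diag]; exact isUnit_one
  · rw [List.mem_ofFn]; exact ⟨i, rfl⟩

end QSLAux

namespace QSLAux2
open QSL QSLAux

variable {k : Type} [Field k] {q : k} {n : ℕ}

/-- Kronecker delta as an integer. -/
def dd {m : ℕ} (a b : Fin m) : ℤ := if a = b then 1 else 0

lemma dd_comm {m : ℕ} (a b : Fin m) : dd a b = dd b a := by
  simp [dd, eq_comm]

/-- The diagonal generator `X i i` as a unit. -/
def Uu (k : Type) [Field k] (q : k) (n : ℕ) (i : Fin (n+1)) : (OqBp k q n)ˣ :=
  (isUnit_diag (q := q) i).unit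

lemma Uu_coe (i : Fin (n+1)) : (↑(Uu k q n i) : OqBp k q n) = XBp k q n i i :=
  (isUnit_diag i).unit_spec

lemma Uu_comm (a b : Fin (n+1)) : Commute (Uu k q n a) (Uu k q n b) := by
  apply Units.ext
  rw [Units.val_mul, Units.val_mul, Uu_coe, Uu_coe]
  exact diag_comm a b

/-- `Δ ν = ∏ X_{ll}^{ν l}`. -/
def Dl (k : Type) [Field k] (q : k) (n : ℕ) (ν : Fin (n+1) → ℤ) : (OqBp k q n)ˣ :=
  Finset.univ.noncommProd (fun l => Uu k q n l ^ ν l)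
    (by intro a _ b _ _; exact (Uu_comm a b).zpow_zpow _ _)

lemma Dl_add (μ ν : Fin (n+1) → ℤ) :
    Dl k q n (μ + ν) = Dl k q n μ * Dl k q n ν := by
  have h := Finset.noncommProd_mul_distrib (s := (Finset.univ : Finset (Fin (n+1))))
    (fun l => Uu k q n l ^ μ l) (fun l => Uu k q n l ^ ν l)
    (fun a _ b _ _ => (Uu_comm a b).zpow_zpow _ _)
    (fun a _ b _ _ => (Uu_comm a b).zpow_zpow _ _)
    (fun a _ b _ _ => (Uu_comm a b).zpow_zpow _ _)
  rw [Dl, Dl, Dl, ← h]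
  exact Finset.noncommProd_congr rfl (fun x _ => by simp [Pi.add_apply, zpow_add]) _

lemma Dl_zero : Dl k q n 0 = 1 := by
  rw [Dl]
  exact (Finset.noncommProd_eq_pow_card _ _ _ 1 (fun x _ => by simp)).trans (one_pow _)

lemma Dl_single (a : Fin (n+1)) (c : ℤ) : Dl k q n (Pi.single a c) = Uu k q n a ^ c := by
  rw [Dl]
  refine (Finset.noncommProd_congr (Finset.insert_erase (Finset.mem_univ a)).symm
    (fun x _ => rfl) (by intro x _ y _ h; exact (Uu_comm x y).zpow_zpow _ _)).trans ?_
  refine (Finset.noncommProd_insert_of_notMem _ _ _ _ (Finset.notMem_erase a _)).trans ?_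
  refine (congrArg (fun t => Uu k q n a ^ (Pi.single a c : Fin (n+1) → ℤ) a * t)
    (Finset.noncommProd_eq_pow_card (Finset.univ.erase a)
      (fun l => Uu k q n l ^ (Pi.single a c : Fin (n+1) → ℤ) l) _ 1
      (fun x hx => by rw [Pi.single_eq_of_ne (Finset.mem_erase.mp hx).1, zpow_zero]))).trans ?_
  rw [Pi.single_eq_same, one_pow, mul_one]

lemma cross_diag_one (hq0 : q ≠ 0) {p r : Fin (n+1)} (hpr : p ≤ r) (l : Fin (n+1)) :
    XBp k q n p r * XBp k q n l l =
      (q ^ (dd l r - dd l p)) • (XBp k q n l l * XBp k q n p r) := by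
  rcases eq_or_lt_of_le hpr with rfl | hlt
  · simp only [sub_self, zpow_zero, one_smul]
    exact (diag_comm (k := k) (q := q) (n := n) p l).eq
  · by_cases hlp : l = p
    · subst hlp
      rw [show dd l r - dd l l = -1 by simp [dd, (ne_of_lt hlt)]]
      have h2 := Xrow (k := k) (q := q) (n := n) l (j := l) (m := r) hlt
      rw [h2, smul_smul, zpow_neg_one, inv_mul_cancel₀ hq0, one_smul]
    · by_cases hlr : l = r
      · subst hlr
        rw [show dd l l - dd l p = 1 by simp [dd, hlp], zpow_one]
        exact Xcol (k := k) (q := q) (n := n) l hlt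
      · rw [show dd l r - dd l p = 0 by simp [dd, hlp, hlr], zpow_zero, one_smul]
        rcases lt_trichotomy l p with h1 | h1 | h1
        · have := Xmixed (k := k) (q := q) (n := n) (i := l) (j := l) (l := p) (m := r)
            h1 (h1.trans hlt)
          rw [Xzero h1, mul_zero, smul_zero, add_zero] at this
          exact this.symm
        · exact absurd h1 hlp
        · rcases lt_trichotomy l r with h2 | h2 | h2
          · exact Xswap h1 h2
          · exact absurd h2 hlr
          · have := Xmixed (k := k) (q := q) (n := n) (i := p) (j := r) (l := l) (m := l)
              h1 h2
            rw [Xzero h2, mul_zero, smul_zero, add_zero] at this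
            exact this

lemma q_comm_pow_nat {u : (OqBp k q n)ˣ} {x : OqBp k q n} {c : k}
    (h : x * ↑u = c • (↑u * x)) :
    ∀ m : ℕ, x * ↑(u ^ m) = (c ^ m) • (↑(u ^ m) * x) := by
  intro m
  induction m with
  | zero => simp
  | succ m ih =>
    rw [pow_succ, Units.val_mul, ← mul_assoc, ih, smul_mul_assoc, mul_assoc, h,
      mul_smul_comm, smul_smul, ← mul_assoc, ← pow_succ]

lemma q_comm_inv {u : (OqBp k q n)ˣ} {x : OqBp k q n} {c : k} (hc : c ≠ 0)
    (h : x * ↑u = c • (↑u * x)) :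
    x * ↑u⁻¹ = c⁻¹ • (↑u⁻¹ * x) := by
  have h1 : (↑u⁻¹ : OqBp k q n) * (x * ↑u) * ↑u⁻¹ = ↑u⁻¹ * x := by
    rw [mul_assoc, mul_assoc, Units.mul_inv, mul_one]
  have h2 : (↑u⁻¹ : OqBp k q n) * (c • (↑u * x)) * ↑u⁻¹ = c • (x * ↑u⁻¹) := by
    rw [mul_smul_comm, smul_mul_assoc]
    congr 1
    rw [← mul_assoc, Units.inv_mul, one_mul]
  rw [h, h2] at h1
  rw [← h1, smul_smul, inv_mul_cancel₀ hc, one_smul]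

lemma q_comm_zpow {u : (OqBp k q n)ˣ} {x : OqBp k q n} {c : k} (hc : c ≠ 0)
    (h : x * ↑u = c • (↑u * x)) (s : ℤ) :
    x * ↑(u ^ s) = (c ^ s) • (↑(u ^ s) * x) := by
  cases s with
  | ofNat m => simpa [zpow_natCast] using q_comm_pow_nat h m
  | negSucc m =>
    rw [zpow_negSucc, zpow_negSucc, ← inv_pow, ← inv_pow]
    exact q_comm_pow_nat (q_comm_inv hc h) (m + 1)

lemma cross_unit (hq0 : q ≠ 0) {p r : Fin (n+1)} (hpr : p ≤ r) (l : Fin (n+1)) (s : ℤ) :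
    XBp k q n p r * ↑(Uu k q n l ^ s) =
      (q ^ (s * (dd l r - dd l p))) • (↑(Uu k q n l ^ s) * XBp k q n p r) := by
  have base : XBp k q n p r * ↑(Uu k q n l) =
      (q ^ (dd l r - dd l p)) • (↑(Uu k q n l) * XBp k q n p r) := by
    rw [Uu_coe]
    exact cross_diag_one hq0 hpr l
  have hc : (q ^ (dd l r - dd l p) : k) ≠ 0 := zpow_ne_zero _ hq0
  have hz := q_comm_zpow hc base s
  rwa [← zpow_mul, mul_comm (dd l r - dd l p) s] at hz

lemma cross_delta (hq0 : q ≠ 0) (ν : Fin (n+1) → ℤ) (p r : Fin (n+1)) :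
    XBp k q n p r * ↑(Dl k q n ν) =
      (q ^ (ν r - ν p)) • (↑(Dl k q n ν) * XBp k q n p r) := by
  rcases le_or_gt p r with hpr | hpr
  · have key : ∀ (S : Finset (Fin (n+1))) (hS),
        XBp k q n p r * ↑(S.noncommProd (fun l => Uu k q n l ^ ν l) hS) =
          (q ^ (∑ l ∈ S, ν l * (dd l r - dd l p))) •
            (↑(S.noncommProd (fun l => Uu k q n l ^ ν l) hS) * XBp k q n p r) := by
      intro S
      induction S using Finset.cons_induction with
      | empty => intro hS; simp
      | cons a S ha ih =>
        intro hS
        rw [Finset.noncommProd_cons, Finset.sum_cons, Units.val_mul, ← mul_assoc,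
          cross_unit hq0 hpr a (ν a), smul_mul_assoc, mul_assoc, ih _, mul_smul_comm,
          smul_smul, ← zpow_add₀ hq0, mul_assoc]
    rw [Dl]; refine (key Finset.univ _).trans ?_
    have hsum : (∑ l : Fin (n+1), ν l * (dd l r - dd l p)) = ν r - ν p := by
      simp only [dd, mul_sub, mul_ite, mul_one, mul_zero, Finset.sum_sub_distrib,
        Finset.sum_ite_eq', Finset.mem_univ, if_true]
    rw [hsum]
  · rw [Xzero hpr, zero_mul, mul_zero, smul_zero]

end QSLAux2

namespace QSLAux3
open QSL QSLAux QSLAux2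

variable {k : Type} [Field k] {q : k} {n : ℕ}

def chi {n : ℕ} (i : Fin (n+1)) : Fin (n+1) → ℤ := Pi.single i 1

/-- The image of the generator `X i j` under the automorphism `Φ_s`. -/
def Ff (k : Type) [Field k] (q : k) (n : ℕ) (s : ℤ) (i j : Fin (n+1)) : OqBp k q n :=
  (q ^ (s * (dd i j - 1))) • (↑(Dl k q n (s • (chi i - chi j))) * XBp k q n i j)

lemma Ff_diag (s : ℤ) (i : Fin (n+1)) : Ff k q n s i i = XBp k q n i i := by
  rw [Ff, show (chi i - chi i : Fin (n+1) → ℤ) = 0 from sub_self _, smul_zero, Dl_zero,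
    Units.val_one, one_mul, show dd i i - 1 = 0 from by simp [dd], mul_zero, zpow_zero, one_smul]

lemma Ff_lower {i j : Fin (n+1)} (h : j < i) (s : ℤ) : Ff k q n s i j = 0 := by
  rw [Ff, Xzero h, mul_zero, smul_zero]

def Cexp {N : ℕ} (i j l m : Fin N) : ℤ :=
  (dd i j - 1) + (dd l m - 1) + ((dd j l - dd j m) - (dd i l - dd i m))

lemma Ff_mul (hq0 : q ≠ 0) (s : ℤ) (i j l m : Fin (n+1)) :
    Ff k q n s i j * Ff k q n s l m =
      (q ^ (s * Cexp i j l m)) •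
        (↑(Dl k q n (s • (chi i - chi j + (chi l - chi m)))) *
          (XBp k q n i j * XBp k q n l m)) := by
  have hexp : (s • (chi l - chi m) : Fin (n+1) → ℤ) j - (s • (chi l - chi m)) i
      = s * ((dd j l - dd j m) - (dd i l - dd i m)) := by
    simp only [Pi.smul_apply, Pi.sub_apply, smul_eq_mul, chi, dd, Pi.single_apply]
    ring
  have h1 : Ff k q n s i j * Ff k q n s l m
      = (q ^ (s * (dd i j - 1)) * q ^ (s * (dd l m - 1))) •
        (↑(Dl k q n (s • (chi i - chi j))) *
          ((XBp k q n i j * ↑(Dl k q n (s • (chi l - chi m)))) * XBp k q n l m)) := by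
    simp only [Ff]
    rw [smul_mul_assoc, mul_smul_comm, smul_smul]
    congr 1
    rw [mul_assoc, ← mul_assoc (XBp k q n i j)]
  rw [h1, cross_delta hq0 (s • (chi l - chi m)) i j, hexp]
  rw [smul_mul_assoc, mul_smul_comm, smul_smul]
  rw [show (s • (chi i - chi j + (chi l - chi m)) : Fin (n+1) → ℤ)
      = s • (chi i - chi j) + s • (chi l - chi m) from smul_add s _ _, Dl_add, Units.val_mul]
  congr 1
  · rw [← zpow_add₀ hq0, ← zpow_add₀ hq0]
    congr 1
    simp only [Cexp]
    ring
  · rw [mul_assoc, mul_assoc]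

lemma Ff_row (hq0 : q ≠ 0) (s : ℤ) (i : Fin (n+1)) {j m : Fin (n+1)} (h : j < m) :
    Ff k q n s i j * Ff k q n s i m = q • (Ff k q n s i m * Ff k q n s i j) := by
  rw [Ff_mul hq0 s i j i m, Ff_mul hq0 s i m i j, Xrow i h]
  rw [mul_smul_comm, smul_smul, smul_smul]
  rw [show (s • (chi i - chi j + (chi i - chi m)) : Fin (n+1) → ℤ)
      = s • (chi i - chi m + (chi i - chi j)) from by abel_nf]
  have hC : Cexp i j i m = Cexp i m i j := by
    simp only [Cexp]
    linear_combination dd_comm j i + dd_comm m j + dd_comm i m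
  rw [hC, mul_comm (q ^ (s * Cexp i m i j)) q]

lemma Ff_col (hq0 : q ≠ 0) (s : ℤ) {i l : Fin (n+1)} (j : Fin (n+1)) (h : i < l) :
    Ff k q n s i j * Ff k q n s l j = q • (Ff k q n s l j * Ff k q n s i j) := by
  rw [Ff_mul hq0 s i j l j, Ff_mul hq0 s l j i j, Xcol j h]
  rw [mul_smul_comm, smul_smul, smul_smul]
  rw [show (s • (chi i - chi j + (chi l - chi j)) : Fin (n+1) → ℤ)
      = s • (chi l - chi j + (chi i - chi j)) from by abel_nf]
  have hC : Cexp i j l j = Cexp l j i j := by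
    simp only [Cexp]
    linear_combination dd_comm j l + dd_comm i j + dd_comm l i
  rw [hC, mul_comm (q ^ (s * Cexp l j i j)) q]

lemma Ff_swap (hq0 : q ≠ 0) (s : ℤ) {i l j m : Fin (n+1)} (h1 : i < l) (h2 : m < j) :
    Ff k q n s i j * Ff k q n s l m = Ff k q n s l m * Ff k q n s i j := by
  rw [Ff_mul hq0 s i j l m, Ff_mul hq0 s l m i j, Xswap h1 h2]
  rw [show (s • (chi i - chi j + (chi l - chi m)) : Fin (n+1) → ℤ)
      = s • (chi l - chi m + (chi i - chi j)) from by abel_nf]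
  have hC : Cexp i j l m = Cexp l m i j := by
    simp only [Cexp]
    linear_combination dd_comm j l + dd_comm m j + dd_comm i m + dd_comm l i
  rw [hC]

lemma Ff_mixed (hq0 : q ≠ 0) (s : ℤ) {i l j m : Fin (n+1)} (h1 : i < l) (h2 : j < m) :
    Ff k q n s i j * Ff k q n s l m =
      Ff k q n s l m * Ff k q n s i j + (q - q⁻¹) • (Ff k q n s i m * Ff k q n s l j) := by
  rw [Ff_mul hq0 s i j l m, Ff_mul hq0 s l m i j, Ff_mul hq0 s i m l j, Xmixed h1 h2]
  rw [mul_add, smul_add, mul_smul_comm, smul_smul, smul_smul]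
  rw [show (s • (chi i - chi j + (chi l - chi m)) : Fin (n+1) → ℤ)
      = s • (chi l - chi m + (chi i - chi j)) from by abel_nf]
  have hC : Cexp i j l m = Cexp l m i j := by
    simp only [Cexp]
    linear_combination dd_comm j l + dd_comm m j + dd_comm i m + dd_comm l i
  congr 1
  · rw [hC]
  · rw [show (s • (chi l - chi m + (chi i - chi j)) : Fin (n+1) → ℤ)
        = s • (chi i - chi m + (chi l - chi j)) from by abel_nf]
    have hC13 : Cexp i j l m = Cexp i m l j := by
      simp only [Cexp]
      linear_combination dd_comm l m + dd_comm j l + dd_comm m j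
    rw [hC13, mul_comm (q ^ (s * Cexp i m l j)) (q - q⁻¹)]

end QSLAux3

namespace QSLAux4
open QSL QSLAux QSLAux2 QSLAux3

variable {k : Type} [Field k] {q : k} {n : ℕ}

def FfA (k : Type) [Field k] (q : k) (n : ℕ) (s : ℤ) :
    FreeAlgebra k (Fin (n+1) × Fin (n+1)) →ₐ[k] OqBp k q n :=
  FreeAlgebra.lift k (fun p => Ff k q n s p.1 p.2)

lemma FfA_X (s : ℤ) (i j : Fin (n+1)) : FfA k q n s (Xf k n i j) = Ff k q n s i j := by
  rw [Xf, FfA, FreeAlgebra.lift_ι_apply]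

lemma FfA_det (hq0 : q ≠ 0) (s : ℤ) : FfA k q n s (qdet k q n) = 1 := by
  rw [qdet, map_sum]
  have hterm : ∀ σ : Equiv.Perm (Fin (n+1)),
      FfA k q n s (((-q) ^ invCount σ) • (List.ofFn fun i => Xf k n i (σ i)).prod)
        = ((-q) ^ invCount σ) • (List.ofFn fun i => Ff k q n s i (σ i)).prod := by
    intro σ
    simp only [map_smul, map_list_prod, List.map_ofFn, Function.comp_def, FfA_X]
  simp only [hterm]
  rw [Finset.sum_eq_single_of_mem (1 : Equiv.Perm (Fin (n+1))) (Finset.mem_univ _)]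
  · rw [invCount_one, pow_zero, one_smul]
    rw [show (List.ofFn fun i => Ff k q n s i ((1 : Equiv.Perm (Fin (n+1))) i))
        = List.ofFn fun l => XBp k q n l l from by
      congr 1
      funext i
      simp only [Equiv.Perm.coe_one, id_eq]
      exact Ff_diag s i]
    exact prod_diag
  · intro σ _ hσ
    obtain ⟨i, hi⟩ := perm_exists_lt hσ
    rw [List.prod_eq_zero, smul_zero]
    rw [List.mem_ofFn]
    exact ⟨i, Ff_lower hi s⟩

lemma FfA_rel (hq0 : q ≠ 0) (s : ℤ) :
    ∀ ⦃x y⦄, SLRel k q n x y → FfA k q n s x = FfA k q n s y := by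
  intro x y h
  induction h with
  | row h => simp only [map_mul, map_smul, FfA_X]; exact Ff_row hq0 s _ h
  | col h => simp only [map_mul, map_smul, FfA_X]; exact Ff_col hq0 s _ h
  | swap h1 h2 => simp only [map_mul, FfA_X]; exact Ff_swap hq0 s h1 h2
  | mixed h1 h2 => simp only [map_mul, map_add, map_smul, FfA_X]; exact Ff_mixed hq0 s h1 h2
  | det => rw [FfA_det hq0 s, map_one]

def gS (k : Type) [Field k] (q : k) (n : ℕ) (hq0 : q ≠ 0) (s : ℤ) :
    OqSL k q n →ₐ[k] OqBp k q n :=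
  RingQuot.liftAlgHom k ⟨FfA k q n s, FfA_rel hq0 s⟩

lemma gS_X (hq0 : q ≠ 0) (s : ℤ) (i j : Fin (n+1)) :
    gS k q n hq0 s (XSL k q n i j) = Ff k q n s i j := by
  rw [XSL, gS, RingQuot.liftAlgHom_mkAlgHom_apply, FfA_X]

def Phi (k : Type) [Field k] (q : k) (n : ℕ) (hq0 : q ≠ 0) (s : ℤ) :
    OqBp k q n →ₐ[k] OqBp k q n :=
  RingQuot.liftAlgHom k ⟨gS k q n hq0 s, by
    rintro x y ⟨h⟩
    rw [gS_X, map_zero]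
    exact Ff_lower h s⟩

lemma Phi_X (hq0 : q ≠ 0) (s : ℤ) (i j : Fin (n+1)) :
    Phi k q n hq0 s (XBp k q n i j) = Ff k q n s i j := by
  rw [XBp, Phi, RingQuot.liftAlgHom_mkAlgHom_apply, gS_X]

lemma Phi_unit (hq0 : q ≠ 0) (s : ℤ) (l : Fin (n+1)) (c : ℤ) :
    Phi k q n hq0 s (↑(Uu k q n l ^ c)) = ↑(Uu k q n l ^ c) := by
  have h0 : Phi k q n hq0 s ↑(Uu k q n l) = ↑(Uu k q n l) := by
    rw [Uu_coe, Phi_X, Ff_diag]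
  set F := (Phi k q n hq0 s).toRingHom.toMonoidHom with hF
  have hu : Units.map F (Uu k q n l) = Uu k q n l := Units.ext (by simpa [hF] using h0)
  have h1 : (↑(Units.map F (Uu k q n l ^ c)) : OqBp k q n)
      = Phi k q n hq0 s (↑(Uu k q n l ^ c)) := rfl
  rw [← h1, map_zpow, hu]

lemma Phi_Dl (hq0 : q ≠ 0) (s : ℤ) (ν : Fin (n+1) → ℤ) :
    Phi k q n hq0 s ↑(Dl k q n ν) = ↑(Dl k q n ν) := by
  rw [Dl]
  have key : ∀ (S : Finset (Fin (n+1))) (hS),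
      Phi k q n hq0 s ↑(S.noncommProd (fun l => Uu k q n l ^ ν l) hS)
        = ↑(S.noncommProd (fun l => Uu k q n l ^ ν l) hS) := by
    intro S
    induction S using Finset.cons_induction with
    | empty => intro hS; simp
    | cons a S ha ih =>
      intro hS
      rw [Finset.noncommProd_cons, Units.val_mul, map_mul, ih _, Phi_unit hq0 s a (ν a)]
  exact key Finset.univ _

lemma Phi_Phi (hq0 : q ≠ 0) (s : ℤ) (i j : Fin (n+1)) :
    Phi k q n hq0 s (Ff k q n (-s) i j) = XBp k q n i j := by
  rw [Ff, map_smul, map_mul, Phi_Dl, Phi_X, Ff]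
  rw [mul_smul_comm, smul_smul, ← mul_assoc, ← Units.val_mul, ← Dl_add]
  rw [show ((-s) • (chi i - chi j) + s • (chi i - chi j) : Fin (n+1) → ℤ) = 0 from by
    rw [neg_smul, neg_add_cancel]]
  rw [Dl_zero, Units.val_one, one_mul, ← zpow_add₀ hq0,
    show (-s) * (dd i j - 1) + s * (dd i j - 1) = 0 from by ring, zpow_zero, one_smul]

lemma Phi_comp (hq0 : q ≠ 0) (s : ℤ) :
    (Phi k q n hq0 s).comp (Phi k q n hq0 (-s)) = AlgHom.id k (OqBp k q n) := by
  refine RingQuot.ringQuot_ext' _ _ _ ?_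
  refine RingQuot.ringQuot_ext' _ _ _ ?_
  refine FreeAlgebra.hom_ext ?_
  funext p
  simp only [Function.comp_apply, AlgHom.coe_comp, AlgHom.coe_id, id_eq]
  show Phi k q n hq0 s (Phi k q n hq0 (-s) (XBp k q n p.1 p.2)) = XBp k q n p.1 p.2
  rw [Phi_X, Phi_Phi]

def Ee (k : Type) [Field k] (q : k) (n : ℕ) (hq0 : q ≠ 0) :
    OqBp k q n ≃ₐ[k] OqBp k q n :=
  AlgEquiv.ofAlgHom (Phi k q n hq0 1) (Phi k q n hq0 (-1))
    (by simpa using Phi_comp (k := k) (q := q) (n := n) hq0 1)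
    (by have := Phi_comp (k := k) (q := q) (n := n) hq0 (-1); rwa [neg_neg] at this)

lemma Ring_inverse_diag (i : Fin (n+1)) :
    Ring.inverse (XBp k q n i i) = (↑((Uu k q n i)⁻¹) : OqBp k q n) := by
  rw [← Uu_coe, Ring.inverse_unit]

lemma Phi_y (hq0 : q ≠ 0) {i j : Fin (n+1)} (h : i < j) :
    Phi k q n hq0 1 (yY k q n i j) = zZ k q n i j := by
  rw [yY, zZ, map_mul, Ring_inverse_diag, Phi_X]
  have hinv : Phi k q n hq0 1 ↑((Uu k q n i)⁻¹) = (↑((Uu k q n i)⁻¹) : OqBp k q n) := by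
    have := Phi_unit (k := k) (q := q) (n := n) hq0 1 i (-1)
    rwa [zpow_neg_one] at this
  rw [hinv, Ring_inverse_diag]
  have hz : XBp k q n i j * ↑(Uu k q n j ^ (-1 : ℤ))
      = (q ^ ((-1 : ℤ) * (dd j j - dd j i))) • (↑(Uu k q n j ^ (-1 : ℤ)) * XBp k q n i j) :=
    cross_unit hq0 (le_of_lt h) j (-1)
  rw [zpow_neg_one] at hz
  rw [hz, Ff]
  rw [show ((1 : ℤ) • (chi i - chi j) : Fin (n+1) → ℤ) = chi i - chi j from one_smul ℤ _]
  rw [show (chi i - chi j : Fin (n+1) → ℤ) = Pi.single i 1 + Pi.single j (-1 : ℤ) from by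
    funext x
    simp only [chi, Pi.sub_apply, Pi.add_apply, Pi.single_apply]
    split_ifs <;> ring]
  rw [Dl_add, Dl_single, Dl_single, zpow_one, Units.val_mul, zpow_neg_one]
  rw [mul_smul_comm, ← mul_assoc, ← mul_assoc, Units.inv_mul, one_mul]
  rw [one_mul]
  rw [show dd i j - 1 = -1 * (dd j j - dd j i) from by
    simp [dd, ne_of_lt h, (ne_of_lt h).symm]]

end QSLAux4

open QSL in
/-- There is a `k`-algebra isomorphism of `O_q(N⁺)` onto `O_q(N⁺)'` sending
`y i j = X_{ii}⁻¹X_{ij}` to `z i j = X_{ij}X_{jj}⁻¹` for all `i < j`. -/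
theorem OqNp_iso_OqNp' (k : Type) [Field k] (q : k) (hq0 : q ≠ 0)
    (hq : ∀ m : ℕ, 0 < m → q ^ m ≠ 1) (n : ℕ) (hn : 1 ≤ n) :
    ∃ e : OqNp k q n ≃ₐ[k] OqNp' k q n,
      ∀ (i j : Fin (n+1)) (h : i < j),
        (e ⟨yY k q n i j, Algebra.subset_adjoin ⟨i, j, h, rfl⟩⟩ : OqBp k q n) =
          zZ k q n i j := by
  
  have hEy : ∀ (i j : Fin (n+1)), i < j →
      QSLAux4.Ee k q n hq0 (yY k q n i j) = zZ k q n i j := by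
    intro i j h
    show QSLAux4.Phi k q n hq0 1 (yY k q n i j) = zZ k q n i j
    exact QSLAux4.Phi_y hq0 h
  have hmap : (OqNp k q n).map ((QSLAux4.Ee k q n hq0 : OqBp k q n →ₐ[k] OqBp k q n)) = OqNp' k q n := by
    rw [OqNp, OqNp', AlgHom.map_adjoin]
    congr 1
    ext x
    constructor
    · rintro ⟨y, ⟨i, j, hij, rfl⟩, rfl⟩
      exact ⟨i, j, hij, hEy i j hij⟩
    · rintro ⟨i, j, hij, rfl⟩
      exact ⟨yY k q n i j, ⟨i, j, hij, rfl⟩, hEy i j hij⟩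
  refine ⟨((QSLAux4.Ee k q n hq0).subalgebraMap (OqNp k q n)).trans
    (Subalgebra.equivOfEq _ _ hmap), ?_⟩
  intro i j h
  have : ((((QSLAux4.Ee k q n hq0).subalgebraMap (OqNp k q n)).trans (Subalgebra.equivOfEq _ _ hmap))
      ⟨yY k q n i j, Algebra.subset_adjoin ⟨i, j, h, rfl⟩⟩ : OqBp k q n)
      = QSLAux4.Ee k q n hq0 (yY k q n i j) := rfl
  rw [this, hEy i j h]
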